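/- arXiv:cs/0506014 — 2 statements merged into one kernel-verified Lean document; each statement's English description precedes it below -/
import Mathlib

section
/- Semilinear subsets of ℕ^k are effectively closed under intersection: if S and T are semilinear subsets of ℕ^k, then S ∩ T is semilinear. -/
/-- Parikh vector of a word over a `k`-letter alphabet. -/
def Par {k : ℕ} (w : List (Fin k)) : Fin k → ℕ := fun i => w.count i

/-- The linear set with base `b` and periods `ps`. -/
def LinSet {k : ℕ} (b : Fin k → ℕ) (ps : List (Fin k → ℕ)) : Set (Fin k → ℕ) :=
  {v | ∃ lam : Fin ps.length → ℕ, v = b + ∑ i, lam i • ps.get i}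

/-- The semilinear set described by a finite list of (base, periods) pairs. -/
def SemiSet {k : ℕ} (d : List ((Fin k → ℕ) × List (Fin k → ℕ))) : Set (Fin k → ℕ) :=
  {v | ∃ p ∈ d, v ∈ LinSet p.1 p.2}

/-- A set is semilinear if it is a finite union of linear sets. -/
def IsSemilinear {k : ℕ} (S : Set (Fin k → ℕ)) : Prop := ∃ d, S = SemiSet d

/-! ### Linear combinations of a list of vectors -/

def comb {M : Type*} [AddCommMonoid M] (L : List M) (c : Fin L.length → ℕ) : M :=
  ∑ i, c i • L.get i

lemma comb_add {M : Type*} [AddCommMonoid M] (L : List M) (c d : Fin L.length → ℕ) :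
    comb L (c + d) = comb L c + comb L d := by
  simp [comb, add_smul, Finset.sum_add_distrib]

lemma comb_zero {M : Type*} [AddCommMonoid M] (L : List M) : comb L 0 = 0 := by simp [comb]

lemma comb_smul {M : Type*} [AddCommMonoid M] (L : List M) (n : ℕ) (c : Fin L.length → ℕ) :
    comb L (n • c) = n • comb L c := by
  simp [comb, mul_smul, Finset.smul_sum]

def combHom {M : Type*} [AddCommMonoid M] (L : List M) : (Fin L.length → ℕ) →+ M where
  toFun := comb L
  map_zero' := comb_zero L
  map_add' := comb_add L

lemma comb_sum {M : Type*} [AddCommMonoid M] (ps : List M) {ι : Type*} [Fintype ι]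
    (c : ι → ℕ) (f : ι → (Fin ps.length → ℕ)) :
    comb ps (∑ i, c i • f i) = ∑ i, c i • comb ps (f i) := by
  have := map_sum (combHom ps) (fun i => c i • f i) Finset.univ
  simp only [combHom, AddMonoidHom.coe_mk, ZeroHom.coe_mk] at this
  rw [this]
  exact Finset.sum_congr rfl fun i _ => comb_smul ps (c i) (f i)

lemma comb_add_mem {M : Type*} [AddCommMonoid M] (L : List M) (c : Fin L.length → ℕ)
    {g : M} (hg : g ∈ L) : ∃ c', comb L c' = comb L c + g := by
  obtain ⟨j, hj⟩ := List.mem_iff_get.mp hg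
  refine ⟨c + fun i => if i = j then 1 else 0, ?_⟩
  rw [comb_add]
  congr 1
  rw [show comb L (fun i => if i = j then 1 else 0) = ∑ i, if i = j then L.get i else 0 from
    Finset.sum_congr rfl fun i _ => by by_cases h : i = j <;> simp [h]]
  rw [Finset.sum_ite_eq' Finset.univ j]
  simpa using hj

/-! ### Pairs of vectors, weights, minimal elements, Dickson's lemma -/

abbrev PairV (m n : ℕ) := (Fin m → ℕ) × (Fin n → ℕ)

def wt {m n : ℕ} (x : PairV m n) : ℕ := (∑ i, x.1 i) + ∑ j, x.2 j

lemma wt_add {m n : ℕ} (x y : PairV m n) : wt (x + y) = wt x + wt y := by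
  simp only [wt, Prod.fst_add, Prod.snd_add, Pi.add_apply, Finset.sum_add_distrib]
  ring

lemma wt_eq_zero {m n : ℕ} {x : PairV m n} (h : wt x = 0) : x = 0 := by
  simp only [wt, Nat.add_eq_zero, Finset.sum_eq_zero_iff, Finset.mem_univ, true_implies] at h
  exact Prod.ext (funext h.1) (funext h.2)

lemma wt_lt {m n : ℕ} {x y : PairV m n} (h : x ≤ y) (hne : x ≠ y) : wt x < wt y := by
  obtain ⟨d, rfl⟩ := le_iff_exists_add.mp h
  rw [wt_add]
  have : wt d ≠ 0 := fun h0 => hne (by rw [wt_eq_zero h0, add_zero])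
  omega

/-- The minimal elements of a set of pairs of vectors. -/
def Minls {m n : ℕ} (S : Set (PairV m n)) : Set (PairV m n) :=
  {e ∈ S | ∀ y ∈ S, y ≤ e → y = e}

lemma exists_minls_le {m n : ℕ} (S : Set (PairV m n)) (x : PairV m n) (hx : x ∈ S) :
    ∃ e ∈ Minls S, e ≤ x := by
  obtain ⟨N, hN⟩ : ∃ N, wt x ≤ N := ⟨wt x, le_rfl⟩
  induction N generalizing x with
  | zero =>
    refine ⟨x, ⟨hx, fun y hy hyx => ?_⟩, le_rfl⟩
    by_contra hne
    exact absurd (wt_lt hyx hne) (by omega)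
  | succ N ih =>
    by_cases h : ∀ y ∈ S, y ≤ x → y = x
    · exact ⟨x, ⟨hx, h⟩, le_rfl⟩
    · push_neg at h
      obtain ⟨y, hy, hyx, hne⟩ := h
      have hwy : wt y ≤ N := by have := wt_lt hyx hne; omega
      obtain ⟨e, he, hey⟩ := ih y hy hwy
      exact ⟨e, he, hey.trans hyx⟩

theorem piPWO (m : ℕ) (s : Set (Fin m → ℕ)) : s.IsPWO :=
  Set.isPWO_of_wellQuasiOrderedLE s

theorem pairPWO (m n : ℕ) (S : Set (PairV m n)) : S.IsPWO :=
  ((piPWO m Set.univ).prod (piPWO n Set.univ)).mono (fun x _ => by simp [Set.mem_prod])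

/-- Dickson's lemma: the set of minimal elements is finite. -/
lemma minls_finite {m n : ℕ} (S : Set (PairV m n)) : (Minls S).Finite := by
  refine IsAntichain.finite_of_partiallyWellOrderedOn ?_ (pairPWO m n (Minls S))
  intro a ha b hb hne hab
  exact hne (hb.2 a ha.1 hab)

/-- Every element of a "difference-closed" set `H` is a combination of the
minimal nonzero elements of `H`. -/
lemma H_gen {m n : ℕ} (H : Set (PairV m n))
    (hdiff : ∀ x d : PairV m n, x ∈ H → x + d ∈ H → d ∈ H)
    (G : List (PairV m n)) (hG : ∀ g ∈ Minls (H \ {0}), g ∈ G) :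
    ∀ h ∈ H, ∃ c, h = comb G c := by
  intro h hh
  obtain ⟨N, hN⟩ : ∃ N, wt h ≤ N := ⟨wt h, le_rfl⟩
  induction N generalizing h with
  | zero =>
    have : h = 0 := wt_eq_zero (by omega)
    exact ⟨0, by rw [this, comb_zero]⟩
  | succ N ih =>
    by_cases h0 : h = 0
    · exact ⟨0, by rw [h0, comb_zero]⟩
    · obtain ⟨e, he, heh⟩ := exists_minls_le (H \ {0}) h ⟨hh, h0⟩
      obtain ⟨d, rfl⟩ := le_iff_exists_add.mp heh
      have hdH : d ∈ H := hdiff e d he.1.1 hh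
      have he0 : e ≠ 0 := he.1.2
      have hwd : wt d ≤ N := by
        rw [wt_add] at hN
        have : wt e ≠ 0 := fun h0 => he0 (wt_eq_zero h0)
        omega
      obtain ⟨c, hc⟩ := ih d hdH hwd
      obtain ⟨c', hc'⟩ := comb_add_mem G c (hG e he)
      exact ⟨c', by rw [hc', ← hc, add_comm]⟩

/-! ### Linear sets via `comb` -/

lemma mem_linSet_iff {k : ℕ} (b : Fin k → ℕ) (ps : List (Fin k → ℕ)) (v : Fin k → ℕ) :
    v ∈ LinSet b ps ↔ ∃ c, v = b + comb ps c := Iff.rfl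

lemma mem_linSet_ofFn {k n : ℕ} (b : Fin k → ℕ) (f : Fin n → (Fin k → ℕ)) (v : Fin k → ℕ) :
    v ∈ LinSet b (List.ofFn f) ↔ ∃ c : Fin n → ℕ, v = b + ∑ i, c i • f i := by
  have hlen : (List.ofFn f).length = n := List.length_ofFn (f := f)
  constructor
  · rintro ⟨lam, rfl⟩
    refine ⟨fun i => lam (Fin.cast hlen.symm i), ?_⟩
    congr 1
    refine Fintype.sum_equiv (finCongr hlen) _ _ fun i => ?_
    simp [List.get_ofFn]
    congr 1
  · rintro ⟨c, rfl⟩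
    refine ⟨fun i => c (Fin.cast hlen i), ?_⟩
    congr 1
    refine (Fintype.sum_equiv (finCongr hlen) _ _ fun i => ?_).symm
    simp [List.get_ofFn]
    congr 1

lemma comb_fst {m n : ℕ} (G : List (PairV m n)) (c : Fin G.length → ℕ) :
    (comb G c).1 = ∑ i, c i • (G.get i).1 := by
  rw [comb, Prod.fst_sum]
  rfl

lemma comb_snd {m n : ℕ} (G : List (PairV m n)) (c : Fin G.length → ℕ) :
    (comb G c).2 = ∑ i, c i • (G.get i).2 := by
  rw [comb, Prod.snd_sum]
  rfl

/-! ### Intersection of two linear sets is semilinear -/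

theorem linset_inter {k : ℕ} (b1 b2 : Fin k → ℕ) (ps qs : List (Fin k → ℕ)) :
    IsSemilinear (LinSet b1 ps ∩ LinSet b2 qs) := by
  classical
  set E : Set (PairV ps.length qs.length) :=
    {x | b1 + comb ps x.1 = b2 + comb qs x.2} with hE
  set H : Set (PairV ps.length qs.length) :=
    {x | comb ps x.1 = comb qs x.2} with hH
  have hEdiff : ∀ x d : PairV ps.length qs.length, x ∈ E → x + d ∈ E → d ∈ H := by
    intro x d hx hxd
    simp only [hE, hH, Set.mem_setOf_eq, Prod.fst_add, Prod.snd_add, comb_add] at *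
    have h2 : b1 + comb ps x.1 + comb ps d.1 = b2 + comb qs x.2 + comb qs d.2 := by
      rw [add_assoc, add_assoc]; exact hxd
    rw [hx] at h2
    exact add_left_cancel h2
  have hHdiff : ∀ x d : PairV ps.length qs.length, x ∈ H → x + d ∈ H → d ∈ H := by
    intro x d hx hxd
    simp only [hH, Set.mem_setOf_eq, Prod.fst_add, Prod.snd_add, comb_add] at *
    rw [hx] at hxd
    exact add_left_cancel hxd
  have hEH : ∀ x d : PairV ps.length qs.length, x ∈ E → d ∈ H → x + d ∈ E := by
    intro x d hx hd
    simp only [hE, hH, Set.mem_setOf_eq, Prod.fst_add, Prod.snd_add, comb_add] at *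
    rw [← add_assoc, ← add_assoc, hx, hd]
  have hH0 : (0 : PairV ps.length qs.length) ∈ H := by
    simp only [hH, Set.mem_setOf_eq, Prod.fst_zero, Prod.snd_zero, comb_zero]
  have hHadd : ∀ x y : PairV ps.length qs.length, x ∈ H → y ∈ H → x + y ∈ H := by
    intro x y hx hy
    simp only [hH, Set.mem_setOf_eq, Prod.fst_add, Prod.snd_add, comb_add] at *
    rw [hx, hy]
  have hHsmul : ∀ (a : ℕ) (g : PairV ps.length qs.length), g ∈ H → a • g ∈ H := by
    intro a g hg
    simp only [hH, Set.mem_setOf_eq, Prod.smul_fst, Prod.smul_snd, comb_smul] at *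
    rw [hg]
  set G : List (PairV ps.length qs.length) := (minls_finite (H \ {0})).toFinset.toList with hGdef
  have hGmem : ∀ g, g ∈ G ↔ g ∈ Minls (H \ {0}) := by
    intro g; rw [hGdef, Finset.mem_toList, Set.Finite.mem_toFinset]
  have hGH : ∀ g ∈ G, g ∈ H := fun g hg => ((hGmem g).mp hg).1.1
  set ME : List (PairV ps.length qs.length) := (minls_finite E).toFinset.toList with hMEdef
  have hMEmem : ∀ e, e ∈ ME ↔ e ∈ Minls E := by
    intro e; rw [hMEdef, Finset.mem_toList, Set.Finite.mem_toFinset]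
  have hcombH : ∀ c : Fin G.length → ℕ, comb G c ∈ H := by
    intro c
    exact Finset.sum_induction _ (· ∈ H) hHadd hH0
      (fun i _ => hHsmul (c i) _ (hGH _ (List.get_mem G i)))
  have hgen : ∀ h ∈ H, ∃ c, h = comb G c := H_gen H hHdiff G (fun g hg => (hGmem g).mpr hg)
  refine ⟨ME.map (fun e => (b1 + comb ps e.1,
      List.ofFn (fun i : Fin G.length => comb ps ((G.get i).1)))), ?_⟩
  ext v
  simp only [Set.mem_inter_iff, SemiSet, Set.mem_setOf_eq]
  constructor
  · rintro ⟨hv1, hv2⟩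
    obtain ⟨l, hl⟩ := (mem_linSet_iff b1 ps v).mp hv1
    obtain ⟨u, hu⟩ := (mem_linSet_iff b2 qs v).mp hv2
    have hx : (l, u) ∈ E := by
      simp only [hE, Set.mem_setOf_eq]
      rw [← hl, ← hu]
    obtain ⟨e, heMin, hex⟩ := exists_minls_le E (l, u) hx
    obtain ⟨d, hd⟩ := le_iff_exists_add.mp hex
    have hdH : d ∈ H := hEdiff e d heMin.1 (hd ▸ hx)
    obtain ⟨c, hc⟩ := hgen d hdH
    refine ⟨(b1 + comb ps e.1, List.ofFn (fun i : Fin G.length => comb ps ((G.get i).1))),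
      List.mem_map.mpr ⟨e, (hMEmem e).mpr heMin, rfl⟩, ?_⟩
    rw [mem_linSet_ofFn]
    refine ⟨c, ?_⟩
    have h1 : comb ps d.1 = ∑ i, c i • comb ps ((G.get i).1) := by
      rw [hc, comb_fst, comb_sum]
    have hld : l = e.1 + d.1 := by
      have : (l, u) = e + d := hd
      rw [Prod.ext_iff] at this
      exact this.1
    rw [hl, hld, comb_add, h1, add_assoc]
  · rintro ⟨p, hp, hvp⟩
    obtain ⟨e, heME, rfl⟩ := List.mem_map.mp hp
    have heMin := (hMEmem e).mp heME
    rw [mem_linSet_ofFn] at hvp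
    obtain ⟨c, hv⟩ := hvp
    set d := comb G c with hdc
    have hdH : d ∈ H := hcombH c
    have hxE : e + d ∈ E := hEH e d heMin.1 hdH
    have h1 : comb ps d.1 = ∑ i, c i • comb ps ((G.get i).1) := by
      rw [hdc, comb_fst, comb_sum]
    have hv1 : v = b1 + comb ps (e + d).1 := by
      rw [hv, Prod.fst_add, comb_add, h1, add_assoc]
    constructor
    · exact (mem_linSet_iff b1 ps v).mpr ⟨(e + d).1, hv1⟩
    · refine (mem_linSet_iff b2 qs v).mpr ⟨(e + d).2, ?_⟩
      rw [hv1]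
      exact hxE

/-! ### Assembly: unions and the main theorem -/

lemma semiSet_nil {k : ℕ} : SemiSet ([] : List ((Fin k → ℕ) × List (Fin k → ℕ))) = ∅ := by
  ext v; simp [SemiSet]

lemma semiSet_cons {k : ℕ} (p : (Fin k → ℕ) × List (Fin k → ℕ))
    (d : List ((Fin k → ℕ) × List (Fin k → ℕ))) :
    SemiSet (p :: d) = LinSet p.1 p.2 ∪ SemiSet d := by
  ext v
  simp only [SemiSet, Set.mem_setOf_eq, List.mem_cons, Set.mem_union]
  constructor
  · rintro ⟨q, hq | hq, hv⟩
    · exact Or.inl (hq ▸ hv)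
    · exact Or.inr ⟨q, hq, hv⟩
  · rintro (hv | ⟨q, hq, hv⟩)
    · exact ⟨p, Or.inl rfl, hv⟩
    · exact ⟨q, Or.inr hq, hv⟩

lemma isSemilinear_union {k : ℕ} {S T : Set (Fin k → ℕ)}
    (hS : IsSemilinear S) (hT : IsSemilinear T) : IsSemilinear (S ∪ T) := by
  obtain ⟨d1, rfl⟩ := hS
  obtain ⟨d2, rfl⟩ := hT
  refine ⟨d1 ++ d2, ?_⟩
  ext v
  simp only [SemiSet, Set.mem_union, Set.mem_setOf_eq, List.mem_append]
  constructor
  · rintro (⟨p, hp, hv⟩ | ⟨p, hp, hv⟩)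
    · exact ⟨p, Or.inl hp, hv⟩
    · exact ⟨p, Or.inr hp, hv⟩
  · rintro ⟨p, hp | hp, hv⟩
    · exact Or.inl ⟨p, hp, hv⟩
    · exact Or.inr ⟨p, hp, hv⟩

lemma isSemilinear_empty {k : ℕ} : IsSemilinear (∅ : Set (Fin k → ℕ)) :=
  ⟨[], semiSet_nil.symm⟩

lemma lin_semi_inter {k : ℕ} (b : Fin k → ℕ) (ps : List (Fin k → ℕ)) :
    ∀ e, IsSemilinear (LinSet b ps ∩ SemiSet e)
  | [] => by rw [semiSet_nil, Set.inter_empty]; exact isSemilinear_empty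
  | q :: e => by
    rw [semiSet_cons, Set.inter_union_distrib_left]
    exact isSemilinear_union (linset_inter b q.1 ps q.2) (lin_semi_inter b ps e)

/-- semilinear subsets of `ℕ^k` are closed under intersection. -/
theorem semilinear_inter {k : ℕ} (S T : Set (Fin k → ℕ))
    (hS : IsSemilinear S) (hT : IsSemilinear T) : IsSemilinear (S ∩ T) := by
  obtain ⟨d, rfl⟩ := hS
  obtain ⟨e, rfl⟩ := hT
  induction d with
  | nil => rw [semiSet_nil, Set.empty_inter]; exact isSemilinear_empty
  | cons p d ih =>
    rw [semiSet_cons, Set.union_inter_distrib_right]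
    exact isSemilinear_union (lin_semi_inter p.1 p.2 e) ih
end

section
/- Linear sets are closed under intersection with the diagonal in an effective sense: for b, p₁,...,p_m ∈ ℕ², the set {n : (n,n) ∈ L(b,{p₁,...,p_m})} is eventually periodic (i.e., it is semilinear as a subset of ℕ). -/
/-- The linear set in `ℕ²` with base `b` and periods `ps`. -/
def LinSet2 (b : ℕ × ℕ) (ps : List (ℕ × ℕ)) : Set (ℕ × ℕ) :=
  {v | ∃ lam : Fin ps.length → ℕ, v = b + ∑ i, lam i • ps.get i}

/-- The semilinear subset of `ℕ` described by a finite list of arithmetic progressions,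
each given by a pair (base, period). -/
def SemiSet1 (d : List (ℕ × ℕ)) : Set ℕ := {n | ∃ p ∈ d, ∃ lam : ℕ, n = p.1 + lam * p.2}

/-- A finite subset of `ℕ` is semilinear. -/
lemma finite_semiSet1 (S : Set ℕ) (h : S.Finite) : ∃ d : List (ℕ × ℕ), S = SemiSet1 d := by
  classical
  refine ⟨h.toFinset.toList.map (fun n => (n, 0)), ?_⟩
  ext n
  simp only [SemiSet1, Set.mem_setOf_eq, List.mem_map, Finset.mem_toList,
    Set.Finite.mem_toFinset]
  constructor
  · intro hn
    exact ⟨(n, 0), ⟨n, hn, rfl⟩, 0, by simp⟩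
  · rintro ⟨p, ⟨m, hm, rfl⟩, lam, rfl⟩
    simpa using hm

/-- A set closed under adding a positive period is semilinear. -/
lemma periodic_semiSet1 (S : Set ℕ) (g : ℕ) (hg : 0 < g)
    (hS : ∀ n ∈ S, n + g ∈ S) : ∃ d : List (ℕ × ℕ), S = SemiSet1 d := by
  classical
  refine ⟨(List.range g).filterMap (fun r =>
    if h : ∃ n ∈ S, n % g = r then some (sInf {m | m ∈ S ∧ m % g = r}, g) else none), ?_⟩
  have hup : ∀ m ∈ S, ∀ lam : ℕ, m + lam * g ∈ S := by
    intro m hm lam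
    induction lam with
    | zero => simpa using hm
    | succ k ih =>
      have := hS _ ih
      have heq : m + k * g + g = m + (k + 1) * g := by ring
      rwa [heq] at this
  ext n
  simp only [SemiSet1, Set.mem_setOf_eq, List.mem_filterMap, List.mem_range]
  constructor
  · intro hn
    set m := sInf {m | m ∈ S ∧ m % g = n % g} with hmdef
    have hne : {m | m ∈ S ∧ m % g = n % g}.Nonempty := ⟨n, hn, rfl⟩
    have hmmem := Nat.sInf_mem hne
    have hmle : m ≤ n := Nat.sInf_le ⟨hn, rfl⟩
    have hmod : m ≡ n [MOD g] := hmmem.2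
    have hdvd : g ∣ n - m := (Nat.modEq_iff_dvd' hmle).mp hmod
    refine ⟨(m, g), ⟨n % g, Nat.mod_lt _ hg, ?_⟩, (n - m) / g, ?_⟩
    · rw [dif_pos ⟨n, hn, rfl⟩]
    · rw [Nat.div_mul_cancel hdvd]
      omega
  · rintro ⟨p, ⟨r, _hr, hsome⟩, lam, rfl⟩
    by_cases h : ∃ n ∈ S, n % g = r
    · rw [dif_pos h] at hsome
      obtain ⟨n₀, hn₀, hr₀⟩ := h
      have hne : {m | m ∈ S ∧ m % g = r}.Nonempty := ⟨n₀, hn₀, hr₀⟩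
      have hmmem := Nat.sInf_mem hne
      cases hsome
      exact hup _ hmmem.1 lam
    · rw [dif_neg h] at hsome
      exact absurd hsome (by simp)

/-- the diagonal slice `{n : (n,n) ∈ L(b,{p₁,...,p_m})}` of a linear set
in `ℕ²` is eventually periodic, i.e. semilinear as a subset of `ℕ` (a finite union of
arithmetic progressions). -/
theorem linear_diagonal_slice_semilinear (b : ℕ × ℕ) (ps : List (ℕ × ℕ)) :
    ∃ d : List (ℕ × ℕ), {n : ℕ | ((n, n) : ℕ × ℕ) ∈ LinSet2 b ps} = SemiSet1 d := by
  classical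
  set S := {n : ℕ | ((n, n) : ℕ × ℕ) ∈ LinSet2 b ps} with hSdef
  by_cases hfin : S.Finite
  · exact finite_semiSet1 S hfin
  · -- infinite case: find a diagonal pump via Dickson's lemma
    have hinf : S.Infinite := hfin
    obtain ⟨e⟩ : Nonempty (ℕ ↪ S) := ⟨hinf.natEmbedding⟩
    have hwit : ∀ k : ℕ, ∃ lam : Fin ps.length → ℕ,
        (((e k : ℕ), (e k : ℕ)) : ℕ × ℕ) = b + ∑ i, lam i • ps.get i := fun k => (e k).2
    choose lam hlam using hwit
    have hpwo : (Set.univ : Set (Fin ps.length → ℕ)).IsPWO :=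
      Set.isPWO_of_wellQuasiOrderedLE _
    obtain ⟨k, l, hkl, hle⟩ := hpwo.exists_lt (f := lam) (fun _ => Set.mem_univ _)
    set μ : Fin ps.length → ℕ := fun i => lam l i - lam k i with hμdef
    have hadd : ∀ i, lam l i = lam k i + μ i := fun i =>
      (Nat.add_sub_cancel' (hle i)).symm
    set X : ℕ × ℕ := ∑ i, μ i • ps.get i with hXdef
    have hsum : ∑ i, lam l i • ps.get i = (∑ i, lam k i • ps.get i) + X := by
      rw [hXdef, ← Finset.sum_add_distrib]
      refine Finset.sum_congr rfl fun i _ => ?_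
      rw [hadd i, add_smul]
    have hkey : (((e l : ℕ), (e l : ℕ)) : ℕ × ℕ) = (((e k : ℕ), (e k : ℕ)) : ℕ × ℕ) + X := by
      rw [hlam l, hlam k, hsum, add_assoc]
    have h1 : (e l : ℕ) = (e k : ℕ) + X.1 := congrArg Prod.fst hkey
    have h2 : (e l : ℕ) = (e k : ℕ) + X.2 := congrArg Prod.snd hkey
    have hX : X = (X.1, X.1) := by
      ext
      · rfl
      · simp only
        omega
    have hne : (e k : ℕ) ≠ (e l : ℕ) := fun h =>
      (by omega : k ≠ l) (e.injective (Subtype.ext h))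
    have hgpos : 0 < X.1 := by omega
    refine periodic_semiSet1 S X.1 hgpos ?_
    intro n hn
    obtain ⟨ν, hν⟩ := hn
    refine ⟨fun i => ν i + μ i, ?_⟩
    have hsum2 : ∑ i, (ν i + μ i) • ps.get i = (∑ i, ν i • ps.get i) + X := by
      rw [hXdef, ← Finset.sum_add_distrib]
      exact Finset.sum_congr rfl fun i _ => add_smul _ _ _
    rw [hsum2, ← add_assoc, ← hν, hX, Prod.mk_add_mk]
end
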